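/- Let K ≥ 3 and let W₁,...,W_K be i.i.d. uniform on F^L over a finite field F, jointly independent of keys Z₁,...,Z_K. If for users k ≠ u the security constraint I({X_i}_{i≠u}; {W_i}_{i≠u} | ∑_{i=1}^K W_i, W_u, Z_u) = 0 holds and the Z's are independent of the W's, then I(X_k; W_k | W_u, Z_u) = 0. -/

import Mathlib

open Finset

/-- Probability of `X = a` under the probability mass function `μ` on the finite
sample space `Ω`. -/
noncomputable def prW {Ω α : Type*} [Fintype Ω] [DecidableEq α] (μ : Ω → ℝ)
    (X : Ω → α) (a : α) : ℝ :=
  ∑ ω ∈ Finset.univ.filter (fun ω => X ω = a), μ ω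

/-- Shannon entropy (natural base) of `X` under the probability mass function `μ`. -/
noncomputable def entW {Ω α : Type*} [Fintype Ω] [Fintype α] [DecidableEq α] (μ : Ω → ℝ)
    (X : Ω → α) : ℝ :=
  -∑ a : α, prW μ X a * Real.log (prW μ X a)

/-- Conditional entropy `H(X | Y)` under `μ`. -/
noncomputable def condEntW {Ω α β : Type*} [Fintype Ω] [Fintype α] [Fintype β]
    [DecidableEq α] [DecidableEq β] (μ : Ω → ℝ) (X : Ω → α) (Y : Ω → β) : ℝ :=
  entW μ (fun ω => (X ω, Y ω)) - entW μ Y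

/-- Conditional mutual information `I(X ; Y | Z)` under `μ`. -/
noncomputable def cmiW {Ω α β γ : Type*} [Fintype Ω] [Fintype α] [Fintype β] [Fintype γ]
    [DecidableEq α] [DecidableEq β] [DecidableEq γ] (μ : Ω → ℝ)
    (X : Ω → α) (Y : Ω → β) (Z : Ω → γ) : ℝ :=
  entW μ (fun ω => (X ω, Z ω)) + entW μ (fun ω => (Y ω, Z ω))
    - entW μ (fun ω => (X ω, Y ω, Z ω)) - entW μ Z

/-- Product mass function making the inputs `W₁,…,W_K` i.i.d. uniform on `F^L` and
jointly independent of the key randomness `z`, which has mass function `ν`. -/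
noncomputable def dsaMeas (F : Type) [Fintype F] (K L : ℕ) {ΩZ : Type} [Fintype ΩZ]
    (ν : ΩZ → ℝ) : (Fin K → Fin L → F) × ΩZ → ℝ :=
  fun ω => ν ω.2 / (Fintype.card (Fin K → Fin L → F) : ℝ)

variable {Ω α β γ : Type*} [Fintype Ω] (μ : Ω → ℝ)

lemma prW_ite [DecidableEq α] (V : Ω → α) (v : α) :
    prW μ V v = ∑ ω, if V ω = v then μ ω else 0 := by
  rw [prW, Finset.sum_filter]

lemma prW_nonneg [DecidableEq α] (hμ : ∀ ω, 0 ≤ μ ω) (V : Ω → α) (v : α) :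
    0 ≤ prW μ V v :=
  Finset.sum_nonneg fun ω _ => hμ ω

lemma prW_comp_inj [DecidableEq α] [DecidableEq β] {e : α → β} (he : Function.Injective e)
    (V : Ω → α) (v : α) :
    prW μ (fun ω => e (V ω)) (e v) = prW μ V v := by
  simp only [prW, he.eq_iff]

lemma prW_fst_marg [Fintype α] [DecidableEq α] [Fintype β] [DecidableEq β]
    (A : Ω → α) (B : Ω → β) (b : β) :
    ∑ a, prW μ (fun ω => (A ω, B ω)) (a, b) = prW μ B b := by
  simp only [prW_ite]
  rw [Finset.sum_comm]
  refine Finset.sum_congr rfl fun ω _ => ?_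
  have : ∀ a, (if (A ω, B ω) = (a, b) then μ ω else 0)
      = if A ω = a then (if B ω = b then μ ω else 0) else 0 := by
    intro a; by_cases h1 : A ω = a <;> by_cases h2 : B ω = b <;> simp [h1, h2, Prod.ext_iff]
  simp only [this]
  rw [Finset.sum_ite_eq univ (A ω) (fun _ => if B ω = b then μ ω else 0)]
  simp

lemma prW_total [Fintype α] [DecidableEq α] (V : Ω → α) :
    ∑ v, prW μ V v = ∑ ω, μ ω := by
  simp only [prW_ite]
  rw [Finset.sum_comm]
  refine Finset.sum_congr rfl fun ω _ => ?_
  rw [Finset.sum_ite_eq univ (V ω) (fun _ => μ ω)]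
  simp

section KL

variable [Fintype α] [Fintype β] [Fintype γ] [DecidableEq α] [DecidableEq β] [DecidableEq γ]
variable (X : Ω → α) (Y : Ω → β) (Z : Ω → γ)

lemma margYZ (y : β) (z : γ) :
    prW μ (fun ω => (Y ω, Z ω)) (y, z) = ∑ x, prW μ (fun ω => (X ω, Y ω, Z ω)) (x, y, z) :=
  (prW_fst_marg μ X (fun ω => (Y ω, Z ω)) (y, z)).symm

lemma margXZ (x : α) (z : γ) :
    prW μ (fun ω => (X ω, Z ω)) (x, z) = ∑ y, prW μ (fun ω => (X ω, Y ω, Z ω)) (x, y, z) := by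
  have hinj : Function.Injective (fun p : α × β × γ => (p.2.1, (p.1, p.2.2))) := by
    rintro ⟨a, b, c⟩ ⟨a', b', c'⟩ h
    simp only [Prod.ext_iff] at h ⊢
    tauto
  have h1 : ∀ y, prW μ (fun ω => (Y ω, (X ω, Z ω))) (y, (x, z))
      = prW μ (fun ω => (X ω, Y ω, Z ω)) (x, y, z) := fun y =>
    prW_comp_inj μ hinj (fun ω => (X ω, Y ω, Z ω)) (x, y, z)
  calc prW μ (fun ω => (X ω, Z ω)) (x, z)
      = ∑ y, prW μ (fun ω => (Y ω, (X ω, Z ω))) (y, (x, z)) :=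
        (prW_fst_marg μ Y (fun ω => (X ω, Z ω)) (x, z)).symm
    _ = ∑ y, prW μ (fun ω => (X ω, Y ω, Z ω)) (x, y, z) := by simp only [h1]

lemma margZ (z : γ) :
    prW μ Z z = ∑ x, ∑ y, prW μ (fun ω => (X ω, Y ω, Z ω)) (x, y, z) := by
  calc prW μ Z z = ∑ y, prW μ (fun ω => (Y ω, Z ω)) (y, z) :=
        (prW_fst_marg μ Y Z z).symm
    _ = ∑ y, ∑ x, prW μ (fun ω => (X ω, Y ω, Z ω)) (x, y, z) := by
        refine Finset.sum_congr rfl fun y _ => margYZ μ X Y Z y z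
    _ = ∑ x, ∑ y, prW μ (fun ω => (X ω, Y ω, Z ω)) (x, y, z) := Finset.sum_comm

lemma cmiW_eq_KL :
    cmiW μ X Y Z = ∑ x, ∑ y, ∑ z,
      prW μ (fun ω => (X ω, Y ω, Z ω)) (x, y, z) *
        (Real.log (prW μ (fun ω => (X ω, Y ω, Z ω)) (x, y, z))
          + Real.log (prW μ Z z)
          - Real.log (prW μ (fun ω => (X ω, Z ω)) (x, z))
          - Real.log (prW μ (fun ω => (Y ω, Z ω)) (y, z))) := by
  set p3 := fun x y z => prW μ (fun ω => (X ω, Y ω, Z ω)) (x, y, z) with hp3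
  have eXYZ : entW μ (fun ω => (X ω, Y ω, Z ω))
      = -∑ x, ∑ y, ∑ z, p3 x y z * Real.log (p3 x y z) := by
    rw [entW]
    simp only [Fintype.sum_prod_type]
    rfl
  have eXZ : entW μ (fun ω => (X ω, Z ω))
      = -∑ x, ∑ y, ∑ z, p3 x y z * Real.log (prW μ (fun ω => (X ω, Z ω)) (x, z)) := by
    rw [entW]
    simp only [Fintype.sum_prod_type]
    congr 1
    refine Finset.sum_congr rfl fun x _ => ?_
    rw [Finset.sum_comm]
    refine Finset.sum_congr rfl fun z _ => ?_
    rw [← Finset.sum_mul, ← margXZ μ X Y Z x z]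
  have eYZ : entW μ (fun ω => (Y ω, Z ω))
      = -∑ x, ∑ y, ∑ z, p3 x y z * Real.log (prW μ (fun ω => (Y ω, Z ω)) (y, z)) := by
    rw [entW]
    simp only [Fintype.sum_prod_type]
    congr 1
    calc ∑ y, ∑ z, prW μ (fun ω => (Y ω, Z ω)) (y, z)
            * Real.log (prW μ (fun ω => (Y ω, Z ω)) (y, z))
        = ∑ y, ∑ z, ∑ x, p3 x y z * Real.log (prW μ (fun ω => (Y ω, Z ω)) (y, z)) := by
          refine Finset.sum_congr rfl fun y _ => Finset.sum_congr rfl fun z _ => ?_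
          rw [← Finset.sum_mul, ← margYZ μ X Y Z y z]
      _ = ∑ y, ∑ x, ∑ z, p3 x y z * Real.log (prW μ (fun ω => (Y ω, Z ω)) (y, z)) :=
          Finset.sum_congr rfl fun y _ => Finset.sum_comm
      _ = ∑ x, ∑ y, ∑ z, p3 x y z * Real.log (prW μ (fun ω => (Y ω, Z ω)) (y, z)) :=
          Finset.sum_comm
  have eZ : entW μ Z = -∑ x, ∑ y, ∑ z, p3 x y z * Real.log (prW μ Z z) := by
    rw [entW]
    congr 1
    calc ∑ z, prW μ Z z * Real.log (prW μ Z z)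
        = ∑ z, ∑ x, ∑ y, p3 x y z * Real.log (prW μ Z z) := by
          refine Finset.sum_congr rfl fun z _ => ?_
          simp only [← Finset.sum_mul]
          rw [← margZ μ X Y Z z]
      _ = ∑ x, ∑ z, ∑ y, p3 x y z * Real.log (prW μ Z z) := Finset.sum_comm
      _ = ∑ x, ∑ y, ∑ z, p3 x y z * Real.log (prW μ Z z) := by
          exact Finset.sum_congr rfl fun x _ => Finset.sum_comm
  rw [cmiW, eXYZ, eXZ, eYZ, eZ]
  have expand : ∀ x y z, p3 x y z *
      (Real.log (p3 x y z) + Real.log (prW μ Z z)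
        - Real.log (prW μ (fun ω => (X ω, Z ω)) (x, z))
        - Real.log (prW μ (fun ω => (Y ω, Z ω)) (y, z)))
      = (p3 x y z * Real.log (p3 x y z) + p3 x y z * Real.log (prW μ Z z))
        - p3 x y z * Real.log (prW μ (fun ω => (X ω, Z ω)) (x, z))
        - p3 x y z * Real.log (prW μ (fun ω => (Y ω, Z ω)) (y, z)) := by
    intro x y z; ring
  simp only [hp3] at expand ⊢
  simp only [expand, Finset.sum_sub_distrib, Finset.sum_add_distrib]
  ring

end KL

section Gibbs

lemma keyIneq (p a b c : ℝ) (hp : 0 ≤ p) (hpa : p ≤ a) (hpb : p ≤ b) (hac : a ≤ c) :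
    p - a * b / c ≤ p * (Real.log p + Real.log c - Real.log a - Real.log b) := by
  rcases hp.eq_or_lt with h | hp'
  · rw [← h, zero_mul, zero_sub, neg_nonpos]
    have ha : 0 ≤ a := h ▸ hpa
    have hb : 0 ≤ b := h ▸ hpb
    exact div_nonneg (mul_nonneg ha hb) (ha.trans hac)
  · have ha : 0 < a := lt_of_lt_of_le hp' hpa
    have hb : 0 < b := lt_of_lt_of_le hp' hpb
    have hc : 0 < c := lt_of_lt_of_le ha hac
    have hr : 0 < p * c / (a * b) := by positivity
    have hlog : Real.log p + Real.log c - Real.log a - Real.log b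
        = Real.log (p * c / (a * b)) := by
      rw [Real.log_div (by positivity : (0:ℝ) < p * c).ne' (by positivity : (0:ℝ) < a * b).ne',
        Real.log_mul hp'.ne' hc.ne', Real.log_mul ha.ne' hb.ne']
      ring
    rw [hlog]
    have h1 : 1 - (p * c / (a * b))⁻¹ ≤ Real.log (p * c / (a * b)) := by
      have := Real.log_le_sub_one_of_pos (inv_pos.mpr hr)
      rw [Real.log_inv] at this; linarith
    have h2 : p * (1 - (p * c / (a * b))⁻¹) = p - a * b / c := by
      field_simp
    calc p - a * b / c = p * (1 - (p * c / (a * b))⁻¹) := h2.symm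
      _ ≤ p * Real.log (p * c / (a * b)) := mul_le_mul_of_nonneg_left h1 hp'.le

lemma keyIneq_strict (p a b c : ℝ) (hp : 0 < p) (hpa : p ≤ a) (hpb : p ≤ b) (hac : a ≤ c)
    (hne : p * c ≠ a * b) :
    p - a * b / c < p * (Real.log p + Real.log c - Real.log a - Real.log b) := by
  have ha : 0 < a := lt_of_lt_of_le hp hpa
  have hb : 0 < b := lt_of_lt_of_le hp hpb
  have hc : 0 < c := lt_of_lt_of_le ha hac
  have hr : 0 < p * c / (a * b) := by positivity
  have hlog : Real.log p + Real.log c - Real.log a - Real.log b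
      = Real.log (p * c / (a * b)) := by
    rw [Real.log_div (by positivity : (0:ℝ) < p * c).ne' (by positivity : (0:ℝ) < a * b).ne',
      Real.log_mul hp.ne' hc.ne', Real.log_mul ha.ne' hb.ne']
    ring
  rw [hlog]
  have hrne : p * c / (a * b) ≠ 1 := by
    rw [ne_eq, div_eq_one_iff_eq (by positivity : (0:ℝ) < a * b).ne']
    exact hne
  have h1 : 1 - (p * c / (a * b))⁻¹ < Real.log (p * c / (a * b)) := by
    have := Real.log_lt_sub_one_of_pos (inv_pos.mpr hr) (by
      rw [ne_eq, inv_eq_one]; exact hrne)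
    rw [Real.log_inv] at this; linarith
  have h2 : p * (1 - (p * c / (a * b))⁻¹) = p - a * b / c := by
    field_simp
  calc p - a * b / c = p * (1 - (p * c / (a * b))⁻¹) := h2.symm
    _ < p * Real.log (p * c / (a * b)) := by
      exact mul_lt_mul_of_pos_left h1 hp

lemma keyEq (p a b c : ℝ) (hp : 0 ≤ p) (hpa : p ≤ a) (hpb : p ≤ b) (hac : a ≤ c)
    (heq : p * (Real.log p + Real.log c - Real.log a - Real.log b) = p - a * b / c) :
    p * c = a * b := by
  rcases hp.eq_or_lt with h | hp'
  · rw [← h, zero_mul, zero_sub] at heq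
    have hdiv : a * b / c = 0 := by linarith
    rw [← h, zero_mul]
    rcases div_eq_zero_iff.mp hdiv with h1 | h1
    · exact h1.symm
    · have ha : a = 0 := le_antisymm (h1 ▸ hac) (h ▸ hpa)
      rw [ha, zero_mul]
  · by_contra hne
    exact absurd heq.symm (ne_of_lt (keyIneq_strict p a b c hp' hpa hpb hac hne))

lemma triple_sum_eq_zero {α β γ : Type*} [Fintype α] [Fintype β] [Fintype γ]
    {e : α → β → γ → ℝ} (h0 : ∀ x y z, 0 ≤ e x y z)
    (h : ∑ x, ∑ y, ∑ z, e x y z = 0) : ∀ x y z, e x y z = 0 := by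
  intro x y z
  have h1 := (Finset.sum_eq_zero_iff_of_nonneg (fun x _ =>
    Finset.sum_nonneg fun y _ => Finset.sum_nonneg fun z _ => h0 x y z)).mp h x (mem_univ x)
  have h2 := (Finset.sum_eq_zero_iff_of_nonneg (fun y _ =>
    Finset.sum_nonneg fun z _ => h0 x y z)).mp h1 y (mem_univ y)
  exact (Finset.sum_eq_zero_iff_of_nonneg (fun z _ => h0 x y z)).mp h2 z (mem_univ z)

end Gibbs

section CmiZero

variable [Fintype α] [Fintype β] [Fintype γ] [DecidableEq α] [DecidableEq β] [DecidableEq γ]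
variable (X : Ω → α) (Y : Ω → β) (Z : Ω → γ)

lemma p3_le_pXZ (hμ0 : ∀ ω, 0 ≤ μ ω) (x : α) (y : β) (z : γ) :
    prW μ (fun ω => (X ω, Y ω, Z ω)) (x, y, z) ≤ prW μ (fun ω => (X ω, Z ω)) (x, z) := by
  rw [margXZ μ X Y Z x z]
  exact Finset.single_le_sum (fun y _ => prW_nonneg μ hμ0 (fun ω => (X ω, Y ω, Z ω)) (x, y, z)) (mem_univ y)

lemma p3_le_pYZ (hμ0 : ∀ ω, 0 ≤ μ ω) (x : α) (y : β) (z : γ) :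
    prW μ (fun ω => (X ω, Y ω, Z ω)) (x, y, z) ≤ prW μ (fun ω => (Y ω, Z ω)) (y, z) := by
  rw [margYZ μ X Y Z y z]
  exact Finset.single_le_sum (fun x _ => prW_nonneg μ hμ0 (fun ω => (X ω, Y ω, Z ω)) (x, y, z)) (mem_univ x)

lemma pXZ_le_pZ (hμ0 : ∀ ω, 0 ≤ μ ω) (x : α) (z : γ) :
    prW μ (fun ω => (X ω, Z ω)) (x, z) ≤ prW μ Z z := by
  rw [← prW_fst_marg μ X Z z]
  exact Finset.single_le_sum (fun x _ => prW_nonneg μ hμ0 (fun ω => (X ω, Z ω)) (x, z)) (mem_univ x)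

lemma pYZ_le_pZ (hμ0 : ∀ ω, 0 ≤ μ ω) (y : β) (z : γ) :
    prW μ (fun ω => (Y ω, Z ω)) (y, z) ≤ prW μ Z z := by
  rw [← prW_fst_marg μ Y Z z]
  exact Finset.single_le_sum (fun y _ => prW_nonneg μ hμ0 (fun ω => (Y ω, Z ω)) (y, z)) (mem_univ y)

lemma cmiW_eq_zero_of_condIndep (hμ0 : ∀ ω, 0 ≤ μ ω)
    (hci : ∀ x y z, prW μ (fun ω => (X ω, Y ω, Z ω)) (x, y, z) * prW μ Z z
      = prW μ (fun ω => (X ω, Z ω)) (x, z) * prW μ (fun ω => (Y ω, Z ω)) (y, z)) :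
    cmiW μ X Y Z = 0 := by
  rw [cmiW_eq_KL]
  refine Finset.sum_eq_zero fun x _ => Finset.sum_eq_zero fun y _ =>
    Finset.sum_eq_zero fun z _ => ?_
  rcases (prW_nonneg μ hμ0 (fun ω => (X ω, Y ω, Z ω)) (x, y, z)).eq_or_lt with h | hpos
  · rw [← h, zero_mul]
  · have hXZ : 0 < prW μ (fun ω => (X ω, Z ω)) (x, z) :=
      lt_of_lt_of_le hpos (p3_le_pXZ μ X Y Z hμ0 x y z)
    have hYZ : 0 < prW μ (fun ω => (Y ω, Z ω)) (y, z) :=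
      lt_of_lt_of_le hpos (p3_le_pYZ μ X Y Z hμ0 x y z)
    have hZ : 0 < prW μ Z z := lt_of_lt_of_le hXZ (pXZ_le_pZ μ X Z hμ0 x z)
    have l1 : Real.log (prW μ (fun ω => (X ω, Y ω, Z ω)) (x, y, z) * prW μ Z z)
        = Real.log (prW μ (fun ω => (X ω, Z ω)) (x, z) * prW μ (fun ω => (Y ω, Z ω)) (y, z)) := by
      rw [hci x y z]
    rw [Real.log_mul hpos.ne' hZ.ne', Real.log_mul hXZ.ne' hYZ.ne'] at l1
    have : Real.log (prW μ (fun ω => (X ω, Y ω, Z ω)) (x, y, z)) + Real.log (prW μ Z z)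
        - Real.log (prW μ (fun ω => (X ω, Z ω)) (x, z))
        - Real.log (prW μ (fun ω => (Y ω, Z ω)) (y, z)) = 0 := by linarith
    rw [this, mul_zero]

lemma condIndep_of_cmiW_eq_zero (hμ0 : ∀ ω, 0 ≤ μ ω) (hμ1 : ∑ ω, μ ω = 1)
    (h : cmiW μ X Y Z = 0) (x : α) (y : β) (z : γ) :
    prW μ (fun ω => (X ω, Y ω, Z ω)) (x, y, z) * prW μ Z z
      = prW μ (fun ω => (X ω, Z ω)) (x, z) * prW μ (fun ω => (Y ω, Z ω)) (y, z) := by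
  set p3 := fun x y z => prW μ (fun ω => (X ω, Y ω, Z ω)) (x, y, z) with hp3def
  set pXZ := fun x z => prW μ (fun ω => (X ω, Z ω)) (x, z) with hpXZdef
  set pYZ := fun y z => prW μ (fun ω => (Y ω, Z ω)) (y, z) with hpYZdef
  set pZ := fun z => prW μ Z z with hpZdef
  set q := fun x y z => pXZ x z * pYZ y z / pZ z with hqdef
  set t := fun x y z => p3 x y z *
    (Real.log (p3 x y z) + Real.log (pZ z) - Real.log (pXZ x z) - Real.log (pYZ y z)) with htdef
  have h3nn : ∀ x y z, 0 ≤ p3 x y z := fun x y z => prW_nonneg μ hμ0 _ _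
  have hle1 : ∀ x y z, p3 x y z ≤ pXZ x z := fun x y z => p3_le_pXZ μ X Y Z hμ0 x y z
  have hle2 : ∀ x y z, p3 x y z ≤ pYZ y z := fun x y z => p3_le_pYZ μ X Y Z hμ0 x y z
  have hle3 : ∀ x z, pXZ x z ≤ pZ z := fun x z => pXZ_le_pZ μ X Z hμ0 x z
  have hle4 : ∀ y z, pYZ y z ≤ pZ z := fun y z => pYZ_le_pZ μ Y Z hμ0 y z
  -- total mass facts
  have sum1 : ∑ x, ∑ y, ∑ z, p3 x y z = 1 := by
    have := prW_total μ (fun ω => (X ω, Y ω, Z ω))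
    rw [hμ1] at this
    rw [← this]
    simp only [Fintype.sum_prod_type, hp3def]
  have sumq : ∑ x, ∑ y, ∑ z, q x y z ≤ 1 := by
    have hz : ∀ z, ∑ x, ∑ y, q x y z ≤ pZ z := by
      intro z
      rcases eq_or_lt_of_le (prW_nonneg μ hμ0 Z z) with h0 | h0
      · have : ∀ x y, q x y z = 0 := by
          intro x y
          have : pXZ x z = 0 :=
            le_antisymm (h0 ▸ hle3 x z) (prW_nonneg μ hμ0 _ _)
          simp [hqdef, this]
        simp only [this, Finset.sum_const_zero]
        exact h0.le
      · have : ∑ x, ∑ y, q x y z = (∑ x, pXZ x z) * (∑ y, pYZ y z) / pZ z := by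
          rw [Finset.sum_mul_sum, Finset.sum_div]
          refine Finset.sum_congr rfl fun x _ => ?_
          rw [Finset.sum_div]
        rw [this, prW_fst_marg μ X Z z, prW_fst_marg μ Y Z z]
        rw [mul_div_assoc, div_self h0.ne', mul_one]
    calc ∑ x, ∑ y, ∑ z, q x y z
          = ∑ x, ∑ z, ∑ y, q x y z :=
            Finset.sum_congr rfl fun _ _ => Finset.sum_comm
      _ = ∑ z, ∑ x, ∑ y, q x y z := Finset.sum_comm
      _ ≤ ∑ z, pZ z := Finset.sum_le_sum fun z _ => hz z
      _ = 1 := by rw [hpZdef]; simp only []; rw [prW_total μ Z, hμ1]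
  have sumt : ∑ x, ∑ y, ∑ z, t x y z = 0 := by
    rw [← cmiW_eq_KL μ X Y Z]; exact h
  -- pointwise inequality
  have hpt : ∀ x y z, 0 ≤ t x y z - p3 x y z + q x y z := by
    intro x y z
    have := keyIneq (p3 x y z) (pXZ x z) (pYZ y z) (pZ z) (h3nn x y z)
      (hle1 x y z) (hle2 x y z) (hle3 x z)
    simp only [htdef, hqdef]
    linarith
  have hsum0 : ∑ x, ∑ y, ∑ z, (t x y z - p3 x y z + q x y z) = 0 := by
    have hexp : ∑ x, ∑ y, ∑ z, (t x y z - p3 x y z + q x y z)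
        = (∑ x, ∑ y, ∑ z, t x y z) - (∑ x, ∑ y, ∑ z, p3 x y z)
          + (∑ x, ∑ y, ∑ z, q x y z) := by
      simp only [Finset.sum_add_distrib, Finset.sum_sub_distrib]
    have hle : ∑ x, ∑ y, ∑ z, (t x y z - p3 x y z + q x y z) ≤ 0 := by
      rw [hexp, sumt, sum1]
      linarith
    have hge : 0 ≤ ∑ x, ∑ y, ∑ z, (t x y z - p3 x y z + q x y z) :=
      Finset.sum_nonneg fun x _ => Finset.sum_nonneg fun y _ =>
        Finset.sum_nonneg fun z _ => hpt x y z
    linarith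
  have hptzero := triple_sum_eq_zero (fun x y z => hpt x y z) hsum0
  have heq : t x y z = p3 x y z - pXZ x z * pYZ y z / pZ z := by
    have := hptzero x y z
    simp only [hqdef] at this
    linarith
  exact keyEq (p3 x y z) (pXZ x z) (pYZ y z) (pZ z) (h3nn x y z)
    (hle1 x y z) (hle2 x y z) (hle3 x z) heq

end CmiZero

section Maps

lemma prW_comp_sum [Fintype α] [DecidableEq α] [DecidableEq β] (f : α → β) (V : Ω → α) (y : β) :
    prW μ (fun ω => f (V ω)) y = ∑ a, if f a = y then prW μ V a else 0 := by
  simp only [prW_ite]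
  have step : ∀ a : α, (if f a = y then (∑ ω, if V ω = a then μ ω else 0) else 0)
      = ∑ ω, (if f a = y then (if V ω = a then μ ω else 0) else 0) := by
    intro a; split_ifs <;> simp
  simp only [step]
  rw [Finset.sum_comm]
  refine Finset.sum_congr rfl fun ω _ => ?_
  have : ∀ a, (if f a = y then if V ω = a then μ ω else 0 else 0)
      = if V ω = a then (if f a = y then μ ω else 0) else 0 := by
    intro a; by_cases h1 : f a = y <;> by_cases h2 : V ω = a <;> simp [h1, h2]
  simp only [this]
  rw [Finset.sum_ite_eq univ (V ω) (fun a => if f a = y then μ ω else 0)]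
  simp

lemma prW_equiv [DecidableEq α] (T : Ω ≃ Ω) (hT : ∀ ω, μ (T ω) = μ ω)
    (V : Ω → α) (v : α) :
    prW μ (fun ω => V (T ω)) v = prW μ V v := by
  simp only [prW_ite]
  calc ∑ ω, (if V (T ω) = v then μ ω else 0)
      = ∑ ω, (if V (T ω) = v then μ (T ω) else 0) := by
        refine Finset.sum_congr rfl fun ω _ => ?_; rw [hT]
    _ = ∑ ω, (if V ω = v then μ ω else 0) :=
        Equiv.sum_comp T (fun ω => if V ω = v then μ ω else 0)

lemma sum_ite_eq_cond [Fintype γ] [DecidableEq γ] (P Q : Prop) [Decidable P] [Decidable Q]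
    (c : γ) (t : γ → ℝ) :
    ∑ c', (if P ∧ Q ∧ c' = c then t c' else 0) = if P ∧ Q then t c else 0 := by
  by_cases hP : P <;> by_cases hQ : Q <;> simp [hP, hQ]

lemma sum_ite_eq_cond1 [Fintype γ] [DecidableEq γ] (P : Prop) [Decidable P]
    (c : γ) (t : γ → ℝ) :
    ∑ c', (if P ∧ c' = c then t c' else 0) = if P then t c else 0 := by
  by_cases hP : P <;> simp [hP]

lemma sum_sum_ite_factor {P1 P2 : Type*} [Fintype P1] [Fintype P2]
    (P : P1 → Prop) (Q : P2 → Prop) [DecidablePred P] [DecidablePred Q]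
    (s : P1 → ℝ) (t : P2 → ℝ) :
    ∑ a, ∑ b, (if P a ∧ Q b then s a * t b else 0)
      = (∑ a, if P a then s a else 0) * (∑ b, if Q b then t b else 0) := by
  rw [Finset.sum_mul_sum]
  exact Finset.sum_congr rfl fun a _ => Finset.sum_congr rfl fun b _ => by
    by_cases hP : P a <;> by_cases hQ : Q b <;> simp [hP, hQ]

lemma condIndep_map {P1 P2 : Type*} [Fintype P1] [DecidableEq P1] [Fintype P2] [DecidableEq P2]
    [Fintype γ] [DecidableEq γ] [DecidableEq α] [DecidableEq β]
    (A : Ω → P1) (B : Ω → P2) (C : Ω → γ) (f : P1 → α) (g : P2 → β)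
    (h : ∀ a b c, prW μ (fun ω => (A ω, B ω, C ω)) (a, b, c) * prW μ C c
      = prW μ (fun ω => (A ω, C ω)) (a, c) * prW μ (fun ω => (B ω, C ω)) (b, c))
    (x : α) (y : β) (c : γ) :
    prW μ (fun ω => (f (A ω), g (B ω), C ω)) (x, y, c) * prW μ C c
      = prW μ (fun ω => (f (A ω), C ω)) (x, c) * prW μ (fun ω => (g (B ω), C ω)) (y, c) := by
  have hL : prW μ (fun ω => (f (A ω), g (B ω), C ω)) (x, y, c)
      = ∑ a, ∑ b, (if f a = x ∧ g b = y
          then prW μ (fun ω => (A ω, B ω, C ω)) (a, b, c) else 0) := by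
    have h1 : prW μ (fun ω => (f (A ω), g (B ω), C ω)) (x, y, c)
        = ∑ v : P1 × P2 × γ, if (f v.1, g v.2.1, v.2.2) = (x, y, c)
            then prW μ (fun ω => (A ω, B ω, C ω)) v else 0 :=
      prW_comp_sum μ (fun v : P1 × P2 × γ => (f v.1, g v.2.1, v.2.2))
        (fun ω => (A ω, B ω, C ω)) (x, y, c)
    rw [h1]
    simp only [Fintype.sum_prod_type, Prod.mk.injEq]
    refine Finset.sum_congr rfl fun a _ => Finset.sum_congr rfl fun b _ => ?_
    by_cases h1 : f a = x <;> by_cases h2 : g b = y <;>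
      simp [h1, h2, Finset.sum_ite_eq']
  have hXf : prW μ (fun ω => (f (A ω), C ω)) (x, c)
      = ∑ a, (if f a = x then prW μ (fun ω => (A ω, C ω)) (a, c) else 0) := by
    have h1 : prW μ (fun ω => (f (A ω), C ω)) (x, c)
        = ∑ v : P1 × γ, if (f v.1, v.2) = (x, c)
            then prW μ (fun ω => (A ω, C ω)) v else 0 :=
      prW_comp_sum μ (fun v : P1 × γ => (f v.1, v.2)) (fun ω => (A ω, C ω)) (x, c)
    rw [h1]
    simp only [Fintype.sum_prod_type, Prod.mk.injEq]
    refine Finset.sum_congr rfl fun a _ => ?_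
    by_cases h1 : f a = x <;> simp [h1, Finset.sum_ite_eq']
  have hYg : prW μ (fun ω => (g (B ω), C ω)) (y, c)
      = ∑ b, (if g b = y then prW μ (fun ω => (B ω, C ω)) (b, c) else 0) := by
    have h1 : prW μ (fun ω => (g (B ω), C ω)) (y, c)
        = ∑ v : P2 × γ, if (g v.1, v.2) = (y, c)
            then prW μ (fun ω => (B ω, C ω)) v else 0 :=
      prW_comp_sum μ (fun v : P2 × γ => (g v.1, v.2)) (fun ω => (B ω, C ω)) (y, c)
    rw [h1]
    simp only [Fintype.sum_prod_type, Prod.mk.injEq]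
    refine Finset.sum_congr rfl fun b _ => ?_
    by_cases h1 : g b = y <;> simp [h1, Finset.sum_ite_eq']
  calc prW μ (fun ω => (f (A ω), g (B ω), C ω)) (x, y, c) * prW μ C c
      = ∑ a, ∑ b, (if f a = x ∧ g b = y
          then prW μ (fun ω => (A ω, C ω)) (a, c)
            * prW μ (fun ω => (B ω, C ω)) (b, c) else 0) := by
        rw [hL, Finset.sum_mul]
        refine Finset.sum_congr rfl fun a _ => ?_
        rw [Finset.sum_mul]
        refine Finset.sum_congr rfl fun b _ => ?_
        rw [ite_mul, zero_mul, h a b c]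
    _ = (∑ a, if f a = x then prW μ (fun ω => (A ω, C ω)) (a, c) else 0)
        * (∑ b, if g b = y then prW μ (fun ω => (B ω, C ω)) (b, c) else 0) :=
        sum_sum_ite_factor _ _ _ _
    _ = prW μ (fun ω => (f (A ω), C ω)) (x, c) * prW μ (fun ω => (g (B ω), C ω)) (y, c) := by
        rw [← hXf, ← hYg]

lemma prW_marg_mid3 {σ ρ : Type*} [Fintype α] [DecidableEq α] [Fintype β] [DecidableEq β]
    [Fintype σ] [DecidableEq σ] [Fintype ρ] [DecidableEq ρ]
    (A : Ω → α) (B : Ω → β) (S : Ω → σ) (P : Ω → ρ) (a : α) (b : β) (p : ρ) :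
    ∑ s, prW μ (fun ω => (A ω, B ω, S ω, P ω)) (a, b, s, p)
      = prW μ (fun ω => (A ω, B ω, P ω)) (a, b, p) := by
  have he : Function.Injective
      (fun v : σ × α × β × ρ => ((v.2.1, v.2.2.1, v.1, v.2.2.2) : α × β × σ × ρ)) := by
    rintro ⟨s1, a1, b1, p1⟩ ⟨s2, a2, b2, p2⟩ h
    simp only [Prod.ext_iff] at h ⊢
    tauto
  have h1 : ∀ s, prW μ (fun ω => (A ω, B ω, S ω, P ω)) (a, b, s, p)
      = prW μ (fun ω => (S ω, A ω, B ω, P ω)) (s, a, b, p) := fun s =>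
    prW_comp_inj μ he (fun ω => (S ω, A ω, B ω, P ω)) (s, a, b, p)
  simp only [h1]
  exact prW_fst_marg μ S (fun ω => (A ω, B ω, P ω)) (a, b, p)

lemma prW_marg_mid2 {σ ρ : Type*} [Fintype α] [DecidableEq α]
    [Fintype σ] [DecidableEq σ] [Fintype ρ] [DecidableEq ρ]
    (A : Ω → α) (S : Ω → σ) (P : Ω → ρ) (a : α) (p : ρ) :
    ∑ s, prW μ (fun ω => (A ω, S ω, P ω)) (a, s, p)
      = prW μ (fun ω => (A ω, P ω)) (a, p) := by
  have he : Function.Injective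
      (fun v : σ × α × ρ => ((v.2.1, v.1, v.2.2) : α × σ × ρ)) := by
    rintro ⟨s1, a1, p1⟩ ⟨s2, a2, p2⟩ h
    simp only [Prod.ext_iff] at h ⊢
    tauto
  have h1 : ∀ s, prW μ (fun ω => (A ω, S ω, P ω)) (a, s, p)
      = prW μ (fun ω => (S ω, A ω, P ω)) (s, a, p) := fun s =>
    prW_comp_inj μ he (fun ω => (S ω, A ω, P ω)) (s, a, p)
  simp only [h1]
  exact prW_fst_marg μ S (fun ω => (A ω, P ω)) (a, p)

end Maps

def shiftEquiv {ι G Θ : Type*} [DecidableEq ι] [AddGroup G] (j : ι) (d : G) :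
    ((ι → G) × Θ) ≃ ((ι → G) × Θ) where
  toFun ω := (Function.update ω.1 j (ω.1 j + d), ω.2)
  invFun ω := (Function.update ω.1 j (ω.1 j - d), ω.2)
  left_inv := by
    rintro ⟨w, θ⟩
    simp only [Prod.mk.injEq]
    refine ⟨?_, trivial⟩
    funext i
    by_cases hi : i = j
    · subst hi; simp
    · simp [Function.update_of_ne hi]
  right_inv := by
    rintro ⟨w, θ⟩
    simp only [Prod.mk.injEq]
    refine ⟨?_, trivial⟩
    funext i
    by_cases hi : i = j
    · subst hi; simp
    · simp [Function.update_of_ne hi]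


/-- Lemma 2 of the paper: with `K ≥ 3` i.i.d. uniform inputs independent of the keys,
messages deterministic functions of the local input and key, and the security
constraint `I({X_i}_{i≠u} ; {W_i}_{i≠u} | ∑ W_i, W_u, Z_u) = 0` at user `u`,
the message of user `k ≠ u` reveals nothing about its own input:
`I(X_k ; W_k | W_u, Z_u) = 0`. -/
theorem stmt13 (F : Type) [Field F] [Fintype F] [DecidableEq F] (K L : ℕ) (hK : 3 ≤ K)
    (ΩZ 𝒵 𝒳 : Type) [Fintype ΩZ] [Fintype 𝒵] [DecidableEq 𝒵] [Fintype 𝒳] [DecidableEq 𝒳]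
    (ν : ΩZ → ℝ) (hν0 : ∀ z, 0 ≤ ν z) (hν1 : ∑ z, ν z = 1)
    (Z : Fin K → ΩZ → 𝒵)
    (X : Fin K → (Fin K → Fin L → F) × ΩZ → 𝒳)
    (hX : ∀ i, ∃ f : (Fin L → F) × 𝒵 → 𝒳, ∀ ω, X i ω = f (ω.1 i, Z i ω.2))
    (k u : Fin K) (hku : k ≠ u)
    (hsec : cmiW (dsaMeas F K L ν)
        (fun ω => fun i : {i : Fin K // i ≠ u} => X i.1 ω)
        (fun ω => fun i : {i : Fin K // i ≠ u} => ω.1 i.1)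
        (fun ω => (∑ i, ω.1 i, ω.1 u, Z u ω.2)) = 0) :
    cmiW (dsaMeas F K L ν) (X k) (fun ω => ω.1 k)
        (fun ω => (ω.1 u, Z u ω.2)) = 0 := by
  classical
  haveI : Nonempty F := ⟨0⟩
  set μ := dsaMeas F K L ν with hμdef
  have hN : (0:ℝ) < (Fintype.card (Fin K → Fin L → F) : ℝ) := by
    exact_mod_cast Fintype.card_pos
  have hμ0 : ∀ ω, 0 ≤ μ ω := fun ω => div_nonneg (hν0 ω.2) hN.le
  have hμ1 : ∑ ω, μ ω = 1 := by
    rw [hμdef]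
    calc ∑ ω : (Fin K → Fin L → F) × ΩZ, dsaMeas F K L ν ω
        = ∑ _w : Fin K → Fin L → F, ∑ z : ΩZ,
            ν z / (Fintype.card (Fin K → Fin L → F) : ℝ) := by
          rw [Fintype.sum_prod_type]
          rfl
      _ = ∑ _w : Fin K → Fin L → F, 1 / (Fintype.card (Fin K → Fin L → F) : ℝ) := by
          refine Finset.sum_congr rfl fun w _ => ?_
          rw [← Finset.sum_div, hν1]
      _ = 1 := by
          rw [Finset.sum_const, Finset.card_univ, nsmul_eq_mul]
          field_simp
  -- choose an auxiliary index j distinct from k and u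
  obtain ⟨j, hjk, hju⟩ : ∃ j : Fin K, j ≠ k ∧ j ≠ u := by
    by_contra hcon
    push_neg at hcon
    have hsub : (univ : Finset (Fin K)) ⊆ {k, u} := by
      intro i _
      simp only [Finset.mem_insert, Finset.mem_singleton]
      rcases eq_or_ne i k with h | h
      · exact Or.inl h
      · exact Or.inr (hcon i h)
    have h1 := Finset.card_le_card hsub
    rw [Finset.card_univ, Fintype.card_fin] at h1
    have h2 : ({k, u} : Finset (Fin K)).card ≤ 2 :=
      le_trans (Finset.card_insert_le _ _) (by simp)
    omega
  -- Step 1: conditional independence from the security constraint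
  have key1 := condIndep_of_cmiW_eq_zero μ
    (fun ω => fun i : {i : Fin K // i ≠ u} => X i.1 ω)
    (fun ω => fun i : {i : Fin K // i ≠ u} => ω.1 i.1)
    (fun ω => (∑ i, ω.1 i, ω.1 u, Z u ω.2)) hμ0 hμ1 hsec
  -- Step 2: data processing to the coordinate k
  have key2 : ∀ (x : 𝒳) (y : Fin L → F) (c : (Fin L → F) × (Fin L → F) × 𝒵),
      prW μ (fun ω => (X k ω, ω.1 k, (∑ i, ω.1 i, ω.1 u, Z u ω.2))) (x, y, c)
        * prW μ (fun ω => ((∑ i, ω.1 i, ω.1 u, Z u ω.2) :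
            (Fin L → F) × (Fin L → F) × 𝒵)) c
      = prW μ (fun ω => (X k ω, (∑ i, ω.1 i, ω.1 u, Z u ω.2))) (x, c)
        * prW μ (fun ω => (ω.1 k, (∑ i, ω.1 i, ω.1 u, Z u ω.2))) (y, c) :=
    fun x y c => condIndep_map μ
      (fun ω => fun i : {i : Fin K // i ≠ u} => X i.1 ω)
      (fun ω => fun i : {i : Fin K // i ≠ u} => ω.1 i.1)
      (fun ω => (∑ i, ω.1 i, ω.1 u, Z u ω.2))
      (fun a => a ⟨k, hku⟩) (fun b => b ⟨k, hku⟩) key1 x y c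
  -- Step 3: constancy in the sum coordinate via a shift bijection
  have hconstC : ∀ (s s' b : Fin L → F) (z : 𝒵),
      prW μ (fun ω => (∑ i, ω.1 i, ω.1 u, Z u ω.2)) (s', b, z)
        = prW μ (fun ω => (∑ i, ω.1 i, ω.1 u, Z u ω.2)) (s, b, z) := by
    intro s s' b z
    simp only [prW_ite]
    rw [← Equiv.sum_comp (shiftEquiv j (s' - s))
        (fun ω : (Fin K → Fin L → F) × ΩZ =>
          if ((∑ i, ω.1 i, ω.1 u, Z u ω.2) :
              (Fin L → F) × (Fin L → F) × 𝒵) = (s', b, z) then μ ω else 0)]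
    refine Finset.sum_congr rfl fun ω _ => ?_
    simp only [shiftEquiv, Equiv.coe_fn_mk]
    have hsum : ∑ i, Function.update ω.1 j (ω.1 j + (s' - s)) i
        = (∑ i, ω.1 i) + (s' - s) := by
      rw [Finset.sum_update_of_mem (Finset.mem_univ j),
        Finset.sum_eq_sum_sdiff_singleton_add (Finset.mem_univ j) ω.1]
      abel
    have hu : Function.update ω.1 j (ω.1 j + (s' - s)) u = ω.1 u :=
      Function.update_of_ne (Ne.symm hju) _ _
    have hμT : μ (Function.update ω.1 j (ω.1 j + (s' - s)), ω.2) = μ ω := rfl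
    simp only [hsum, hu, hμT]
    have hiff : ((∑ i, ω.1 i) + (s' - s) = s') ↔ ((∑ i, ω.1 i) = s) := by
      constructor
      · intro h
        have h2 := eq_sub_of_add_eq h
        rwa [sub_sub_cancel] at h2
      · intro h; rw [h]; abel
    simp only [Prod.mk.injEq, hiff]
  have hconstY : ∀ (y : Fin L → F) (s s' b : Fin L → F) (z : 𝒵),
      prW μ (fun ω => (ω.1 k, (∑ i, ω.1 i, ω.1 u, Z u ω.2))) (y, (s', b, z))
        = prW μ (fun ω => (ω.1 k, (∑ i, ω.1 i, ω.1 u, Z u ω.2))) (y, (s, b, z)) := by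
    intro y s s' b z
    simp only [prW_ite]
    rw [← Equiv.sum_comp (shiftEquiv j (s' - s))
        (fun ω : (Fin K → Fin L → F) × ΩZ =>
          if ((ω.1 k, (∑ i, ω.1 i, ω.1 u, Z u ω.2)) :
              (Fin L → F) × (Fin L → F) × (Fin L → F) × 𝒵) = (y, (s', b, z)) then μ ω else 0)]
    refine Finset.sum_congr rfl fun ω _ => ?_
    simp only [shiftEquiv, Equiv.coe_fn_mk]
    have hsum : ∑ i, Function.update ω.1 j (ω.1 j + (s' - s)) i
        = (∑ i, ω.1 i) + (s' - s) := by
      rw [Finset.sum_update_of_mem (Finset.mem_univ j),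
        Finset.sum_eq_sum_sdiff_singleton_add (Finset.mem_univ j) ω.1]
      abel
    have hu : Function.update ω.1 j (ω.1 j + (s' - s)) u = ω.1 u :=
      Function.update_of_ne (Ne.symm hju) _ _
    have hk2 : Function.update ω.1 j (ω.1 j + (s' - s)) k = ω.1 k :=
      Function.update_of_ne (Ne.symm hjk) _ _
    have hμT : μ (Function.update ω.1 j (ω.1 j + (s' - s)), ω.2) = μ ω := rfl
    simp only [hsum, hu, hk2, hμT]
    have hiff : ((∑ i, ω.1 i) + (s' - s) = s') ↔ ((∑ i, ω.1 i) = s) := by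
      constructor
      · intro h
        have h2 := eq_sub_of_add_eq h
        rwa [sub_sub_cancel] at h2
      · intro h; rw [h]; abel
    simp only [Prod.mk.injEq, hiff]
  -- Step 4: marginalize over the sum coordinate and conclude
  have hci : ∀ (x : 𝒳) (y : Fin L → F) (p : (Fin L → F) × 𝒵),
      prW μ (fun ω => (X k ω, ω.1 k, (ω.1 u, Z u ω.2))) (x, y, p)
        * prW μ (fun ω => ((ω.1 u, Z u ω.2) : (Fin L → F) × 𝒵)) p
      = prW μ (fun ω => (X k ω, (ω.1 u, Z u ω.2))) (x, p)
        * prW μ (fun ω => (ω.1 k, (ω.1 u, Z u ω.2))) (y, p) := by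
    rintro x y ⟨b, z⟩
    -- marginal identities over the sum coordinate s
    have m3 : ∑ s, prW μ (fun ω => (X k ω, ω.1 k, (∑ i, ω.1 i, ω.1 u, Z u ω.2)))
          (x, y, (s, b, z))
        = prW μ (fun ω => (X k ω, ω.1 k, (ω.1 u, Z u ω.2))) (x, y, (b, z)) :=
      prW_marg_mid3 μ (X k) (fun ω => ω.1 k) (fun ω => ∑ i, ω.1 i)
        (fun ω => (ω.1 u, Z u ω.2)) x y (b, z)
    have m2 : ∑ s, prW μ (fun ω => (X k ω, (∑ i, ω.1 i, ω.1 u, Z u ω.2))) (x, (s, b, z))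
        = prW μ (fun ω => (X k ω, (ω.1 u, Z u ω.2))) (x, (b, z)) :=
      prW_marg_mid2 μ (X k) (fun ω => ∑ i, ω.1 i) (fun ω => (ω.1 u, Z u ω.2)) x (b, z)
    have m2' : ∑ s, prW μ (fun ω => (ω.1 k, (∑ i, ω.1 i, ω.1 u, Z u ω.2))) (y, (s, b, z))
        = prW μ (fun ω => (ω.1 k, (ω.1 u, Z u ω.2))) (y, (b, z)) :=
      prW_marg_mid2 μ (fun ω => ω.1 k) (fun ω => ∑ i, ω.1 i)
        (fun ω => (ω.1 u, Z u ω.2)) y (b, z)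
    have m1 : ∑ s, prW μ (fun ω => (∑ i, ω.1 i, ω.1 u, Z u ω.2)) (s, (b, z))
        = prW μ (fun ω => ((ω.1 u, Z u ω.2) : (Fin L → F) × 𝒵)) (b, z) :=
      prW_fst_marg μ (fun ω => ∑ i, ω.1 i) (fun ω => (ω.1 u, Z u ω.2)) (b, z)
    set c0 := prW μ (fun ω => (∑ i, ω.1 i, ω.1 u, Z u ω.2)) ((0 : Fin L → F), b, z) with hc0
    set d0 := prW μ (fun ω => (ω.1 k, (∑ i, ω.1 i, ω.1 u, Z u ω.2)))
      (y, ((0 : Fin L → F), b, z)) with hd0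
    have hs : ∀ s : Fin L → F,
        prW μ (fun ω => (X k ω, ω.1 k, (∑ i, ω.1 i, ω.1 u, Z u ω.2))) (x, y, (s, b, z)) * c0
        = prW μ (fun ω => (X k ω, (∑ i, ω.1 i, ω.1 u, Z u ω.2))) (x, (s, b, z)) * d0 := by
      intro s
      have h := key2 x y (s, b, z)
      rw [hconstC 0 s b z, hconstY y 0 s b z] at h
      exact h
    have hN2 : prW μ (fun ω => ((ω.1 u, Z u ω.2) : (Fin L → F) × 𝒵)) (b, z)
        = (Fintype.card (Fin L → F) : ℝ) * c0 := by
      rw [← m1]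
      calc ∑ s, prW μ (fun ω => (∑ i, ω.1 i, ω.1 u, Z u ω.2)) (s, (b, z))
          = ∑ _s : Fin L → F, c0 :=
            Finset.sum_congr rfl fun s _ => hconstC 0 s b z
        _ = (Fintype.card (Fin L → F) : ℝ) * c0 := by
            rw [Finset.sum_const, Finset.card_univ, nsmul_eq_mul]
    have hN3 : prW μ (fun ω => (ω.1 k, (ω.1 u, Z u ω.2))) (y, (b, z))
        = (Fintype.card (Fin L → F) : ℝ) * d0 := by
      rw [← m2']
      calc ∑ s, prW μ (fun ω => (ω.1 k, (∑ i, ω.1 i, ω.1 u, Z u ω.2))) (y, (s, b, z))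
          = ∑ _s : Fin L → F, d0 :=
            Finset.sum_congr rfl fun s _ => hconstY y 0 s b z
        _ = (Fintype.card (Fin L → F) : ℝ) * d0 := by
            rw [Finset.sum_const, Finset.card_univ, nsmul_eq_mul]
    have hstar :
        prW μ (fun ω => (X k ω, ω.1 k, (ω.1 u, Z u ω.2))) (x, y, (b, z)) * c0
        = prW μ (fun ω => (X k ω, (ω.1 u, Z u ω.2))) (x, (b, z)) * d0 := by
      rw [← m3, ← m2, Finset.sum_mul, Finset.sum_mul]
      exact Finset.sum_congr rfl fun s _ => hs s
    rw [hN2, hN3]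
    calc prW μ (fun ω => (X k ω, ω.1 k, (ω.1 u, Z u ω.2))) (x, y, (b, z))
          * ((Fintype.card (Fin L → F) : ℝ) * c0)
        = (Fintype.card (Fin L → F) : ℝ)
          * (prW μ (fun ω => (X k ω, ω.1 k, (ω.1 u, Z u ω.2))) (x, y, (b, z)) * c0) := by
          ring
      _ = (Fintype.card (Fin L → F) : ℝ)
          * (prW μ (fun ω => (X k ω, (ω.1 u, Z u ω.2))) (x, (b, z)) * d0) := by
          rw [hstar]
      _ = prW μ (fun ω => (X k ω, (ω.1 u, Z u ω.2))) (x, (b, z))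
          * ((Fintype.card (Fin L → F) : ℝ) * d0) := by
          ring
  exact cmiW_eq_zero_of_condIndep μ (X k) (fun ω => ω.1 k)
    (fun ω => (ω.1 u, Z u ω.2)) hμ0 fun x y p => hci x y p
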